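/- For positive integers k and n and variables x_1,...,x_n in a commutative ring, e_k(x_1^2,...,x_n^2) = Σ_{i=-k}^{k} (-1)^i e_{k+i}(x_1,...,x_n) · e_{k-i}(x_1,...,x_n). -/

import Mathlib

open Polynomial Finset

private def Esig {R : Type*} [CommRing R] (s : Multiset R) (m : ℤ) : R :=
  if 0 ≤ m then s.esymm m.toNat else 0

private def sgn {R : Type*} [CommRing R] (m : ℤ) : R :=
  ((((-1 : ℤˣ) ^ m : ℤˣ) : ℤ) : R)

private theorem esymm_eq_zero_of_card_lt {R : Type*} [CommRing R] (s : Multiset R) {m : ℕ}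
    (h : Multiset.card s < m) : s.esymm m = 0 := by
  obtain ⟨i, hi, rfl⟩ : ∃ i, 0 < i ∧ m = Multiset.card s + i := ⟨m - Multiset.card s, by omega, by omega⟩
  rw [Multiset.esymm, Multiset.powersetCard_card_add _ hi]
  simp

private theorem sgn_natCast {R : Type*} [CommRing R] (c : ℕ) : (sgn c : R) = (-1 : R) ^ c := by
  simp [sgn, zpow_natCast]

private theorem sgn_sub {R : Type*} [CommRing R] (a b : ℤ) :
    (sgn (a - b) : R) = sgn a * sgn b := by
  rw [sgn, zpow_sub, Int.units_inv_eq_self]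
  push_cast
  rfl

private theorem aux {R : Type*} [CommRing R] (s : Multiset R) (k : ℕ) :
    (s.map fun t => t ^ 2).esymm k =
      ∑ i ∈ Finset.Icc (-(k : ℤ)) (k : ℤ),
        (sgn i : R) * s.esymm ((k : ℤ) + i).toNat * s.esymm ((k : ℤ) - i).toNat := by
  nontriviality R
  set n := Multiset.card s with hn
  by_cases hkn : n < k
  · rw [esymm_eq_zero_of_card_lt _ (by rwa [Multiset.card_map])]
    symm
    apply Finset.sum_eq_zero
    intro i hi
    simp only [Finset.mem_Icc] at hi
    rcases le_or_gt 0 i with h0 | h0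
    · rw [esymm_eq_zero_of_card_lt s (m := ((k : ℤ) + i).toNat) (by omega)]
      ring
    · rw [esymm_eq_zero_of_card_lt s (m := ((k : ℤ) - i).toNat) (by omega)]
      ring
  have hk_le : k ≤ n := not_lt.mp hkn
  set A := (s.map fun r => X + C r).prod with hA
  set B := (s.map fun r => X - C r).prod with hB
  set Q := ((s.map fun t => t ^ 2).map fun t => X - C t).prod with hQ
  have hAB : A * B = Polynomial.expand R 2 Q := by
    rw [hA, hB, hQ, ← Multiset.prod_map_mul, map_multiset_prod, Multiset.map_map,
      Multiset.map_map]
    apply congrArg Multiset.prod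
    apply Multiset.map_congr rfl
    intro r _
    simp only [Function.comp_apply, map_sub, Polynomial.expand_X, Polynomial.expand_C]
    rw [show (C (r ^ 2) : R[X]) = C r ^ 2 from map_pow C r 2]
    ring
  have hdegA : A.natDegree = n := by
    rw [hA, Polynomial.natDegree_multiset_prod_of_monic]
    · rw [Multiset.map_map]
      simp [Function.comp_def, natDegree_X_add_C, hn]
    · intro f hf
      obtain ⟨r, _, rfl⟩ := Multiset.mem_map.mp hf
      exact monic_X_add_C r
  have hdegB : B.natDegree = n := by
    rw [hB, Polynomial.natDegree_multiset_prod_of_monic]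
    · rw [Multiset.map_map]
      simp [Function.comp_def, natDegree_X_sub_C, hn]
    · intro f hf
      obtain ⟨r, _, rfl⟩ := Multiset.mem_map.mp hf
      exact monic_X_sub_C (x := r)
  have hcoeffA : ∀ a : ℕ, A.coeff a = Esig s ((n : ℤ) - a) := by
    intro a
    rcases le_or_gt a n with h | h
    · rw [hA, Multiset.prod_X_add_C_coeff s (by rwa [← hn]), Esig, if_pos (by omega)]
      congr 1
      omega
    · rw [Polynomial.coeff_eq_zero_of_natDegree_lt (by omega), Esig, if_neg (by omega)]
  have hcoeffB : ∀ b : ℕ, B.coeff b = sgn ((n : ℤ) - b) * Esig s ((n : ℤ) - b) := by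
    intro b
    rcases le_or_gt b n with h | h
    · rw [hB, Multiset.prod_X_sub_C_coeff s (by rwa [← hn]), Esig, if_pos (by omega)]
      rw [show ((n : ℤ) - b) = ((n - b : ℕ) : ℤ) by omega, sgn_natCast, Int.toNat_natCast]
    · rw [Polynomial.coeff_eq_zero_of_natDegree_lt (by omega), Esig, if_neg (by omega), mul_zero]
  have hQcoeff : Q.coeff (n - k) = (-1 : R) ^ k * (s.map fun t => t ^ 2).esymm k := by
    have hcard : Multiset.card (s.map fun t : R => t ^ 2) = n := by
      rw [Multiset.card_map]
    rw [hQ, Multiset.prod_X_sub_C_coeff _ (k := n - k) (by omega), hcard,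
      Nat.sub_sub_self hk_le]
  have hmain : (-1 : R) ^ k * (s.map fun t => t ^ 2).esymm k
      = ∑ p ∈ Finset.HasAntidiagonal.antidiagonal (2 * (n - k)), A.coeff p.1 * B.coeff p.2 := by
    rw [← Polynomial.coeff_mul, hAB,
      Polynomial.coeff_expand (by norm_num : 0 < 2),
      if_pos (Dvd.intro _ rfl), Nat.mul_div_cancel_left _ (by norm_num)]
    exact hQcoeff.symm
  -- transform the antidiagonal sum
  have hstep1 : ∑ p ∈ Finset.HasAntidiagonal.antidiagonal (2 * (n - k)), A.coeff p.1 * B.coeff p.2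
      = ∑ i ∈ Finset.Icc ((k : ℤ) - n) ((n : ℤ) - k),
          Esig s ((k : ℤ) + i) * (sgn ((k : ℤ) - i) * Esig s ((k : ℤ) - i)) := by
    rw [Finset.Nat.sum_antidiagonal_eq_sum_range_succ_mk]
    apply Finset.sum_nbij' (i := fun a : ℕ => (n : ℤ) - k - a)
      (j := fun i : ℤ => ((n : ℤ) - k - i).toNat)
    · intro a ha
      simp only [Finset.mem_range] at ha
      simp only [Finset.mem_Icc]
      omega
    · intro i hi
      simp only [Finset.mem_Icc] at hi
      simp only [Finset.mem_range]
      omega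
    · intro a ha
      simp only [Finset.mem_range] at ha
      omega
    · intro i hi
      simp only [Finset.mem_Icc] at hi
      omega
    · intro a ha
      simp only [Finset.mem_range] at ha
      rw [hcoeffA, hcoeffB]
      rw [show ((n : ℤ) - (a : ℤ)) = (k : ℤ) + ((n : ℤ) - k - a) by omega,
        show ((n : ℤ) - ((2 * (n - k) - a : ℕ) : ℤ)) = (k : ℤ) - ((n : ℤ) - k - a) by omega]
  have hvanish_hi : ∀ i : ℤ, (n : ℤ) < (k : ℤ) + i → Esig s ((k : ℤ) + i) = 0 := by
    intro i hi
    rw [Esig]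
    split
    · exact esymm_eq_zero_of_card_lt s (by omega)
    · rfl
  have hvanish_lo : ∀ i : ℤ, (n : ℤ) < (k : ℤ) - i → Esig s ((k : ℤ) - i) = 0 := by
    intro i hi
    rw [Esig]
    split
    · exact esymm_eq_zero_of_card_lt s (by omega)
    · rfl
  have hstep2 : ∑ i ∈ Finset.Icc ((k : ℤ) - n) ((n : ℤ) - k),
          Esig s ((k : ℤ) + i) * (sgn ((k : ℤ) - i) * Esig s ((k : ℤ) - i))
      = ∑ i ∈ Finset.Icc (-(n : ℤ)) (n : ℤ),
          Esig s ((k : ℤ) + i) * (sgn ((k : ℤ) - i) * Esig s ((k : ℤ) - i)) := by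
    apply Finset.sum_subset
    · apply Finset.Icc_subset_Icc <;> omega
    · intro i hi hni
      simp only [Finset.mem_Icc] at hi hni
      rcases le_or_gt i ((n : ℤ) - k) with h | h
      · rw [hvanish_lo i (by omega)]
        ring
      · rw [hvanish_hi i (by omega)]
        ring
  have hstep3 : ∑ i ∈ Finset.Icc (-(k : ℤ)) (k : ℤ),
          (sgn i : R) * Esig s ((k : ℤ) + i) * Esig s ((k : ℤ) - i)
      = ∑ i ∈ Finset.Icc (-(n : ℤ)) (n : ℤ),
          (sgn i : R) * Esig s ((k : ℤ) + i) * Esig s ((k : ℤ) - i) := by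
    apply Finset.sum_subset
    · apply Finset.Icc_subset_Icc <;> omega
    · intro i hi hni
      simp only [Finset.mem_Icc] at hi hni
      rcases le_or_gt i (k : ℤ) with h | h
      · rw [show Esig s ((k : ℤ) + i) = 0 by rw [Esig, if_neg (by omega)]]
        ring
      · rw [show Esig s ((k : ℤ) - i) = 0 by rw [Esig, if_neg (by omega)]]
        ring
  have hpt : ∀ i : ℤ,
      Esig s ((k : ℤ) + i) * (sgn ((k : ℤ) - i) * Esig s ((k : ℤ) - i))
      = (-1 : R) ^ k * ((sgn i : R) * Esig s ((k : ℤ) + i) * Esig s ((k : ℤ) - i)) := by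
    intro i
    rw [sgn_sub, sgn_natCast]
    ring
  have hcancel : (-1 : R) ^ k * (s.map fun t => t ^ 2).esymm k
      = (-1 : R) ^ k * ∑ i ∈ Finset.Icc (-(k : ℤ)) (k : ℤ),
          (sgn i : R) * Esig s ((k : ℤ) + i) * Esig s ((k : ℤ) - i) := by
    rw [hmain, hstep1, hstep2, hstep3, Finset.mul_sum]
    exact Finset.sum_congr rfl fun i _ => hpt i
  have := ((IsUnit.neg isUnit_one).pow k).mul_left_cancel hcancel
  rw [this]
  apply Finset.sum_congr rfl
  intro i hi
  simp only [Finset.mem_Icc] at hi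
  rw [Esig, if_pos (by omega), Esig, if_pos (by omega)]

/-- Corollary 1.2: `e_k(x₁²,…,x_n²) = ∑_{i=-k}^{k} (-1)^i e_{k+i}(x) e_{k-i}(x)`. -/
theorem esymm_sq_convolution {R : Type*} [CommRing R]
    (k n : ℕ) (hk : 0 < k) (hn : 0 < n) (x : Fin n → R) :
    Multiset.esymm (((List.ofFn x).map (fun t => t ^ 2) : List R) : Multiset R) k =
      ∑ i ∈ Finset.Icc (-(k : ℤ)) (k : ℤ),
        (((((-1 : ℤˣ) ^ i : ℤˣ) : ℤ) : R)) *
          Multiset.esymm ((List.ofFn x : List R) : Multiset R) ((k : ℤ) + i).toNat *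
          Multiset.esymm ((List.ofFn x : List R) : Multiset R) ((k : ℤ) - i).toNat := by
  have := aux (R := R) (↑(List.ofFn x)) k
  rwa [Multiset.map_coe] at this
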